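/- Let Φ be a free R-module and M = S*(Φ) its symmetric algebra, regarded as a commutative cocommutative Hopf algebra with Φ primitive. Let r : Φ⊗Φ → S be any linear map to a commutative R-algebra S. Then r extends to an S-valued bicharacter of M via the permanent formula: r(φ₁⋯φₘ ⊗ φ'₁⋯φ'ₙ) = 0 if m≠n, and Σ_{σ∈Sₘ} ∏ᵢ r(φᵢ⊗φ'_{σ(i)}) if m=n, for φᵢ, φ'ᵢ ∈ Φ. -/

import Mathlib

open TensorProduct MvPolynomial

/-- `ρ` is an `S`-valued bicharacter of the bialgebra `M`, with respect to the
coproduct `Δ` and counit `η`. -/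
def IsBicharacter (R M S : Type) [CommRing R] [CommRing M] [Algebra R M]
    [CommRing S] [Algebra R S]
    (Δ : M →ₗ[R] M ⊗[R] M) (η : M →ₗ[R] R) (ρ : M →ₗ[R] M →ₗ[R] S) : Prop :=
  (∀ a : M, ρ 1 a = algebraMap R S (η a)) ∧
  (∀ a : M, ρ a 1 = algebraMap R S (η a)) ∧
  (∀ (a b c : M) (ι : Type) (t : Finset ι) (c₁ c₂ : ι → M),
    Δ c = ∑ i ∈ t, c₁ i ⊗ₜ[R] c₂ i →
    ρ (a * b) c = ∑ i ∈ t, ρ a (c₁ i) * ρ b (c₂ i)) ∧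
  (∀ (a b c : M) (ι : Type) (t : Finset ι) (a₁ a₂ : ι → M),
    Δ a = ∑ i ∈ t, a₁ i ⊗ₜ[R] a₂ i →
    ρ a (b * c) = ∑ i ∈ t, ρ (a₁ i) b * ρ (a₂ i) c)


open scoped Classical


section Conv
variable {R S N : Type} [CommRing R] [CommRing S] [Algebra R S]
  [AddCommGroup N] [Module R N]

noncomputable def conv (Δl : N →ₗ[R] N ⊗[R] N) (f g : N →ₗ[R] S) : N →ₗ[R] S :=
  LinearMap.mul' R S ∘ₗ TensorProduct.map f g ∘ₗ Δl

noncomputable def convOne (ηl : N →ₗ[R] R) : N →ₗ[R] S :=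
  Algebra.linearMap R S ∘ₗ ηl

variable (Δl : N →ₗ[R] N ⊗[R] N) (ηl : N →ₗ[R] R)

theorem conv_apply (f g : N →ₗ[R] S) (x : N) :
    conv Δl f g x = LinearMap.mul' R S (TensorProduct.map f g (Δl x)) := rfl

theorem convOne_apply (x : N) : convOne (S := S) ηl x = algebraMap R S (ηl x) := rfl

-- pure-tensor helper lemmas
private theorem L1 : (LinearMap.mul' R S) ∘ₗ TensorProduct.map (LinearMap.mul' R S) LinearMap.id
    = (LinearMap.mul' R S) ∘ₗ TensorProduct.map LinearMap.id (LinearMap.mul' R S)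
      ∘ₗ (TensorProduct.assoc R S S S).toLinearMap := by
  apply TensorProduct.ext_threefold
  intro x y z
  simp [mul_assoc]

private theorem L2 (f g h : N →ₗ[R] S) :
    (TensorProduct.assoc R S S S).toLinearMap ∘ₗ
      TensorProduct.map (TensorProduct.map f g) h
    = (TensorProduct.map f (TensorProduct.map g h)) ∘ₗ
        (TensorProduct.assoc R N N N).toLinearMap := by
  apply TensorProduct.ext_threefold
  intro x y z
  simp

private theorem L3 : (LinearMap.mul' R S) ∘ₗ (TensorProduct.comm R S S).toLinearMap
    = LinearMap.mul' R S := by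
  apply TensorProduct.ext'
  intro x y
  simp [mul_comm]

private theorem L4 (f g : N →ₗ[R] S) :
    (TensorProduct.map g f) ∘ₗ (TensorProduct.comm R N N).toLinearMap
    = (TensorProduct.comm R S S).toLinearMap ∘ₗ TensorProduct.map f g := by
  apply TensorProduct.ext'
  intro x y
  simp

private theorem L5 : (LinearMap.mul' R S) ∘ₗ TensorProduct.map (Algebra.linearMap R S) LinearMap.id
    = (TensorProduct.lid R S).toLinearMap := by
  apply TensorProduct.ext'
  intro x y
  simp [Algebra.smul_def]

private theorem L5r : (LinearMap.mul' R S) ∘ₗ TensorProduct.map LinearMap.id (Algebra.linearMap R S)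
    = (TensorProduct.rid R S).toLinearMap := by
  apply TensorProduct.ext'
  intro x y
  simp [Algebra.smul_def, mul_comm]

private theorem L6 (f : N →ₗ[R] S) :
    (TensorProduct.lid R S).toLinearMap ∘ₗ TensorProduct.map LinearMap.id f
    = f ∘ₗ (TensorProduct.lid R N).toLinearMap := by
  apply TensorProduct.ext'
  intro x y
  simp

private theorem L6r (f : N →ₗ[R] S) :
    (TensorProduct.rid R S).toLinearMap ∘ₗ TensorProduct.map f LinearMap.id
    = f ∘ₗ (TensorProduct.rid R N).toLinearMap := by
  apply TensorProduct.ext'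
  intro x y
  simp

theorem conv_assoc
    (hco : ∀ x : N, (TensorProduct.assoc R N N N) (TensorProduct.map Δl LinearMap.id (Δl x))
      = TensorProduct.map LinearMap.id Δl (Δl x))
    (f g h : N →ₗ[R] S) :
    conv Δl (conv Δl f g) h = conv Δl f (conv Δl g h) := by
  apply LinearMap.ext; intro x
  have e1 : TensorProduct.map (conv Δl f g) h
      = (TensorProduct.map (LinearMap.mul' R S) LinearMap.id) ∘ₗ
          (TensorProduct.map (TensorProduct.map f g) h) ∘ₗ
            (TensorProduct.map Δl LinearMap.id) := by
    rw [← TensorProduct.map_comp, ← TensorProduct.map_comp]; rfl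
  have e2 : TensorProduct.map f (conv Δl g h)
      = (TensorProduct.map LinearMap.id (LinearMap.mul' R S)) ∘ₗ
          (TensorProduct.map f (TensorProduct.map g h)) ∘ₗ
            (TensorProduct.map LinearMap.id Δl) := by
    rw [← TensorProduct.map_comp, ← TensorProduct.map_comp]; rfl
  rw [conv_apply, conv_apply, e1, e2]
  simp only [LinearMap.comp_apply]
  rw [← hco x]
  have e3 := LinearMap.congr_fun (L2 (S := S) f g h) (TensorProduct.map Δl LinearMap.id (Δl x))
  simp only [LinearMap.comp_apply, LinearEquiv.coe_toLinearMap] at e3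
  rw [← e3]
  have e4 := LinearMap.congr_fun (L1 (R := R) (S := S))
    (TensorProduct.map (TensorProduct.map f g) h (TensorProduct.map Δl LinearMap.id (Δl x)))
  simp only [LinearMap.comp_apply, LinearEquiv.coe_toLinearMap] at e4
  rw [e4]

theorem conv_comm
    (hcc : ∀ x : N, (TensorProduct.comm R N N) (Δl x) = Δl x)
    (f g : N →ₗ[R] S) : conv Δl f g = conv Δl g f := by
  apply LinearMap.ext; intro x
  rw [conv_apply, conv_apply]
  conv_rhs => rw [← hcc x]
  have e1 := LinearMap.congr_fun (L4 (S := S) f g) (Δl x)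
  simp only [LinearMap.comp_apply, LinearEquiv.coe_toLinearMap] at e1
  rw [e1]
  have e2 := LinearMap.congr_fun (L3 (R := R) (S := S)) (TensorProduct.map f g (Δl x))
  simp only [LinearMap.comp_apply, LinearEquiv.coe_toLinearMap] at e2
  rw [e2]

theorem conv_one_left
    (hcl : ∀ x : N, (TensorProduct.lid R N) (TensorProduct.map ηl LinearMap.id (Δl x)) = x)
    (f : N →ₗ[R] S) : conv Δl (convOne ηl) f = f := by
  apply LinearMap.ext; intro x
  have e1 : TensorProduct.map (convOne (S := S) ηl) f
      = (TensorProduct.map (Algebra.linearMap R S) LinearMap.id) ∘ₗ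
          (TensorProduct.map LinearMap.id f) ∘ₗ (TensorProduct.map ηl LinearMap.id) := by
    rw [← TensorProduct.map_comp, ← TensorProduct.map_comp]; rfl
  rw [conv_apply, e1]
  simp only [LinearMap.comp_apply]
  have e2 := LinearMap.congr_fun (L5 (R := R) (S := S))
    (TensorProduct.map LinearMap.id f (TensorProduct.map ηl LinearMap.id (Δl x)))
  simp only [LinearMap.comp_apply, LinearEquiv.coe_toLinearMap] at e2
  rw [e2]
  have e3 := LinearMap.congr_fun (L6 (S := S) f) (TensorProduct.map ηl LinearMap.id (Δl x))
  simp only [LinearMap.comp_apply, LinearEquiv.coe_toLinearMap] at e3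
  rw [e3, hcl x]

theorem conv_one_right
    (hcr : ∀ x : N, (TensorProduct.rid R N) (TensorProduct.map LinearMap.id ηl (Δl x)) = x)
    (f : N →ₗ[R] S) : conv Δl f (convOne ηl) = f := by
  apply LinearMap.ext; intro x
  have e1 : TensorProduct.map f (convOne (S := S) ηl)
      = (TensorProduct.map LinearMap.id (Algebra.linearMap R S)) ∘ₗ
          (TensorProduct.map f LinearMap.id) ∘ₗ (TensorProduct.map LinearMap.id ηl) := by
    rw [← TensorProduct.map_comp, ← TensorProduct.map_comp]; rfl
  rw [conv_apply, e1]
  simp only [LinearMap.comp_apply]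
  have e2 := LinearMap.congr_fun (L5r (R := R) (S := S))
    (TensorProduct.map f LinearMap.id (TensorProduct.map LinearMap.id ηl (Δl x)))
  simp only [LinearMap.comp_apply, LinearEquiv.coe_toLinearMap] at e2
  rw [e2]
  have e3 := LinearMap.congr_fun (L6r (S := S) f) (TensorProduct.map LinearMap.id ηl (Δl x))
  simp only [LinearMap.comp_apply, LinearEquiv.coe_toLinearMap] at e3
  rw [e3, hcr x]

theorem conv_add_left (f₁ f₂ g : N →ₗ[R] S) :
    conv Δl (f₁ + f₂) g = conv Δl f₁ g + conv Δl f₂ g := by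
  apply LinearMap.ext; intro x
  simp [conv_apply, TensorProduct.map_add_left]

theorem conv_add_right (f g₁ g₂ : N →ₗ[R] S) :
    conv Δl f (g₁ + g₂) = conv Δl f g₁ + conv Δl f g₂ := by
  apply LinearMap.ext; intro x
  simp [conv_apply, TensorProduct.map_add_right]

theorem conv_smul_left (c : R) (f g : N →ₗ[R] S) :
    conv Δl (c • f) g = c • conv Δl f g := by
  apply LinearMap.ext; intro x
  simp [conv_apply, TensorProduct.map_smul_left]

theorem conv_smul_right (c : R) (f g : N →ₗ[R] S) :
    conv Δl f (c • g) = c • conv Δl f g := by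
  apply LinearMap.ext; intro x
  simp [conv_apply, TensorProduct.map_smul_right]

theorem conv_zero_left (g : N →ₗ[R] S) : conv Δl 0 g = 0 := by
  apply LinearMap.ext; intro x
  simp [conv_apply]

theorem conv_zero_right (f : N →ₗ[R] S) : conv Δl f 0 = 0 := by
  apply LinearMap.ext; intro x
  simp [conv_apply]


noncomputable def convCommRing (Δl : N →ₗ[R] N ⊗[R] N) (ηl : N →ₗ[R] R)
    (hco : ∀ x : N, (TensorProduct.assoc R N N N) (TensorProduct.map Δl LinearMap.id (Δl x))
      = TensorProduct.map LinearMap.id Δl (Δl x))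
    (hcc : ∀ x : N, (TensorProduct.comm R N N) (Δl x) = Δl x)
    (hcl : ∀ x : N, (TensorProduct.lid R N) (TensorProduct.map ηl LinearMap.id (Δl x)) = x)
    (hcr : ∀ x : N, (TensorProduct.rid R N) (TensorProduct.map LinearMap.id ηl (Δl x)) = x) :
    CommRing (N →ₗ[R] S) :=
  { (inferInstance : AddCommGroup (N →ₗ[R] S)) with
    mul := conv Δl
    one := convOne ηl
    mul_assoc := conv_assoc Δl hco
    mul_comm := conv_comm Δl hcc
    one_mul := conv_one_left Δl ηl hcl
    mul_one := conv_one_right Δl ηl hcr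
    left_distrib := fun f g h => conv_add_right Δl f g h
    right_distrib := fun f g h => conv_add_left Δl f g h
    zero_mul := conv_zero_left Δl
    mul_zero := conv_zero_right Δl }

noncomputable def convAlgebra (Δl : N →ₗ[R] N ⊗[R] N) (ηl : N →ₗ[R] R)
    (hco : ∀ x : N, (TensorProduct.assoc R N N N) (TensorProduct.map Δl LinearMap.id (Δl x))
      = TensorProduct.map LinearMap.id Δl (Δl x))
    (hcc : ∀ x : N, (TensorProduct.comm R N N) (Δl x) = Δl x)
    (hcl : ∀ x : N, (TensorProduct.lid R N) (TensorProduct.map ηl LinearMap.id (Δl x)) = x)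
    (hcr : ∀ x : N, (TensorProduct.rid R N) (TensorProduct.map LinearMap.id ηl (Δl x)) = x) :
    letI := convCommRing (S := S) Δl ηl hco hcc hcl hcr
    Algebra R (N →ₗ[R] S) := by
  letI := convCommRing (S := S) Δl ηl hco hcc hcl hcr
  exact @Algebra.ofModule R (N →ₗ[R] S) _ _ LinearMap.module
    (fun c f g => conv_smul_left Δl c f g)
    (fun c f g => conv_smul_right Δl c f g)

end Conv

section CoalgLaws
variable {R ι : Type} [CommRing R]
variable (Δ : MvPolynomial ι R →ₐ[R] MvPolynomial ι R ⊗[R] MvPolynomial ι R)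
variable (η : MvPolynomial ι R →ₐ[R] R)

private theorem brMapIdL :
    (Algebra.TensorProduct.map Δ (AlgHom.id R (MvPolynomial ι R))).toLinearMap
      = TensorProduct.map Δ.toLinearMap LinearMap.id :=
  TensorProduct.ext' fun x y => by simp

private theorem brMapIdR :
    (Algebra.TensorProduct.map (AlgHom.id R (MvPolynomial ι R)) Δ).toLinearMap
      = TensorProduct.map LinearMap.id Δ.toLinearMap :=
  TensorProduct.ext' fun x y => by simp

private theorem brAssoc :
    ((Algebra.TensorProduct.assoc R R R (MvPolynomial ι R) (MvPolynomial ι R)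
        (MvPolynomial ι R)).toAlgHom.toLinearMap)
      = (TensorProduct.assoc R (MvPolynomial ι R) (MvPolynomial ι R)
          (MvPolynomial ι R)).toLinearMap :=
  TensorProduct.ext_threefold fun x y w => by
    simp [Algebra.TensorProduct.assoc_tmul]

private theorem brComm :
    ((Algebra.TensorProduct.comm R (MvPolynomial ι R) (MvPolynomial ι R)).toAlgHom.toLinearMap)
      = (TensorProduct.comm R (MvPolynomial ι R) (MvPolynomial ι R)).toLinearMap :=
  TensorProduct.ext' fun x y => by simp

private theorem brEtaL :
    (Algebra.TensorProduct.map η (AlgHom.id R (MvPolynomial ι R))).toLinearMap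
      = TensorProduct.map η.toLinearMap LinearMap.id :=
  TensorProduct.ext' fun x y => by simp

private theorem brEtaR :
    (Algebra.TensorProduct.map (AlgHom.id R (MvPolynomial ι R)) η).toLinearMap
      = TensorProduct.map LinearMap.id η.toLinearMap :=
  TensorProduct.ext' fun x y => by simp

private theorem brLid :
    ((Algebra.TensorProduct.lid R (MvPolynomial ι R)).toAlgHom.toLinearMap)
      = (TensorProduct.lid R (MvPolynomial ι R)).toLinearMap :=
  TensorProduct.ext' fun x y => by simp

private theorem brRid :
    ((Algebra.TensorProduct.rid R R (MvPolynomial ι R)).toAlgHom.toLinearMap)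
      = (TensorProduct.rid R (MvPolynomial ι R)).toLinearMap :=
  TensorProduct.ext' fun x y => by
    simp [Algebra.TensorProduct.rid_tmul, TensorProduct.rid_tmul]

variable (hΔ : ∀ i : ι, Δ (X i) = X i ⊗ₜ[R] (1 : MvPolynomial ι R)
      + (1 : MvPolynomial ι R) ⊗ₜ[R] X i)
variable (hη : ∀ i : ι, η (X i) = 0)

include hΔ in
theorem mv_coassoc : ∀ x : MvPolynomial ι R,
    (TensorProduct.assoc R (MvPolynomial ι R) (MvPolynomial ι R) (MvPolynomial ι R))
        (TensorProduct.map Δ.toLinearMap LinearMap.id (Δ.toLinearMap x))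
      = TensorProduct.map LinearMap.id Δ.toLinearMap (Δ.toLinearMap x) := by
  intro x
  have hFG : ((Algebra.TensorProduct.assoc R R R (MvPolynomial ι R) (MvPolynomial ι R)
      (MvPolynomial ι R)).toAlgHom.comp
      ((Algebra.TensorProduct.map Δ (AlgHom.id R (MvPolynomial ι R))).comp Δ))
      = (Algebra.TensorProduct.map (AlgHom.id R (MvPolynomial ι R)) Δ).comp Δ := by
    apply MvPolynomial.algHom_ext
    intro i
    simp [hΔ, Algebra.TensorProduct.one_def, Algebra.TensorProduct.assoc_tmul, tmul_add,
      add_tmul]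
    abel
  have h1 := DFunLike.congr_fun hFG x
  simp only [AlgHom.coe_comp, AlgEquiv.toAlgHom_eq_coe, AlgHom.coe_coe,
    Function.comp_apply] at h1
  have e1 := DFunLike.congr_fun (brMapIdL Δ) (Δ x)
  have e2 := DFunLike.congr_fun (brMapIdR Δ) (Δ x)
  have e3 := DFunLike.congr_fun (brAssoc (R := R) (ι := ι))
    (TensorProduct.map Δ.toLinearMap LinearMap.id (Δ.toLinearMap x))
  simp only [AlgHom.toLinearMap_apply, LinearEquiv.coe_toLinearMap,
    AlgEquiv.toAlgHom_eq_coe, AlgHom.coe_coe] at e1 e2 e3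
  calc (TensorProduct.assoc R _ _ _) (TensorProduct.map Δ.toLinearMap LinearMap.id (Δ.toLinearMap x))
      = (Algebra.TensorProduct.assoc R R R _ _ _)
          ((Algebra.TensorProduct.map Δ (AlgHom.id R (MvPolynomial ι R))) (Δ x)) := by
        rw [e1]; exact e3.symm
    _ = (Algebra.TensorProduct.map (AlgHom.id R (MvPolynomial ι R)) Δ) (Δ x) := h1
    _ = TensorProduct.map LinearMap.id Δ.toLinearMap (Δ.toLinearMap x) := e2

include hΔ in
theorem mv_cocomm : ∀ x : MvPolynomial ι R,
    (TensorProduct.comm R (MvPolynomial ι R) (MvPolynomial ι R)) (Δ.toLinearMap x)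
      = Δ.toLinearMap x := by
  intro x
  simp only [AlgHom.toLinearMap_apply]
  have hFG : ((Algebra.TensorProduct.comm R (MvPolynomial ι R)
      (MvPolynomial ι R)).toAlgHom.comp Δ) = Δ := by
    apply MvPolynomial.algHom_ext
    intro i
    simp [hΔ, add_comm]
  have h1 := DFunLike.congr_fun hFG x
  simp only [AlgHom.coe_comp, AlgEquiv.toAlgHom_eq_coe, AlgHom.coe_coe,
    Function.comp_apply] at h1
  have e1 := DFunLike.congr_fun (brComm (R := R) (ι := ι)) (Δ x)
  simp only [AlgHom.toLinearMap_apply, LinearEquiv.coe_toLinearMap,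
    AlgEquiv.toAlgHom_eq_coe, AlgHom.coe_coe] at e1
  rw [← e1]
  exact h1

include hΔ hη in
theorem mv_counit_left : ∀ x : MvPolynomial ι R,
    (TensorProduct.lid R (MvPolynomial ι R))
        (TensorProduct.map η.toLinearMap LinearMap.id (Δ.toLinearMap x)) = x := by
  intro x
  simp only [AlgHom.toLinearMap_apply]
  have hFG : ((Algebra.TensorProduct.lid R (MvPolynomial ι R)).toAlgHom.comp
      ((Algebra.TensorProduct.map η (AlgHom.id R (MvPolynomial ι R))).comp Δ))
      = AlgHom.id R (MvPolynomial ι R) := by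
    apply MvPolynomial.algHom_ext
    intro i
    simp [hΔ, hη, Algebra.TensorProduct.one_def]
  have h1 := DFunLike.congr_fun hFG x
  simp only [AlgHom.coe_comp, AlgEquiv.toAlgHom_eq_coe, AlgHom.coe_coe,
    Function.comp_apply, AlgHom.coe_id, id_eq] at h1
  have e1 := DFunLike.congr_fun (brEtaL η) (Δ x)
  have e2 := DFunLike.congr_fun (brLid (R := R) (ι := ι))
    (TensorProduct.map η.toLinearMap LinearMap.id (Δ.toLinearMap x))
  simp only [AlgHom.toLinearMap_apply, LinearEquiv.coe_toLinearMap,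
    AlgEquiv.toAlgHom_eq_coe, AlgHom.coe_coe] at e1 e2
  rw [← e2, ← e1]
  exact h1

include hΔ hη in
theorem mv_counit_right : ∀ x : MvPolynomial ι R,
    (TensorProduct.rid R (MvPolynomial ι R))
        (TensorProduct.map LinearMap.id η.toLinearMap (Δ.toLinearMap x)) = x := by
  intro x
  simp only [AlgHom.toLinearMap_apply]
  have hFG : ((Algebra.TensorProduct.rid R R (MvPolynomial ι R)).toAlgHom.comp
      ((Algebra.TensorProduct.map (AlgHom.id R (MvPolynomial ι R)) η).comp Δ))
      = AlgHom.id R (MvPolynomial ι R) := by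
    apply MvPolynomial.algHom_ext
    intro i
    simp [hΔ, hη, Algebra.TensorProduct.one_def, Algebra.TensorProduct.rid_tmul]
  have h1 := DFunLike.congr_fun hFG x
  simp only [AlgHom.coe_comp, AlgEquiv.toAlgHom_eq_coe, AlgHom.coe_coe,
    Function.comp_apply, AlgHom.coe_id, id_eq] at h1
  have e1 := DFunLike.congr_fun (brEtaR η) (Δ x)
  have e2 := DFunLike.congr_fun (brRid (R := R) (ι := ι))
    (TensorProduct.map LinearMap.id η.toLinearMap (Δ.toLinearMap x))
  simp only [AlgHom.toLinearMap_apply, LinearEquiv.coe_toLinearMap,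
    AlgEquiv.toAlgHom_eq_coe, AlgHom.coe_coe] at e1 e2
  rw [← e2, ← e1]
  exact h1

end CoalgLaws
section Pi
variable {R S Φ ι : Type} [CommRing R] [CommRing S] [Algebra R S]
  [AddCommGroup Φ] [Module R Φ]
variable (bΦ : Module.Basis ι R Φ)

/-- auxiliary: degree-one projection target -/
noncomputable def hfun (d : ι →₀ ℕ) : Φ :=
  if (d.sum fun _ n => n) = 1 then ∑ i ∈ d.support, bΦ i else 0

theorem total_eq_zero_iff (d : ι →₀ ℕ) : (d.sum fun _ n => n) = 0 ↔ d = 0 := by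
  constructor
  · intro h
    ext i
    by_contra hi
    have hi' : d i ≠ 0 := by simpa using hi
    have hmem : i ∈ d.support := Finsupp.mem_support_iff.mpr hi'
    have h2 : d i ≤ ∑ x ∈ d.support, d x :=
      Finset.single_le_sum (f := fun j => d j) (fun j _ => Nat.zero_le _) hmem
    have h' : ∑ x ∈ d.support, d x = 0 := by simpa [Finsupp.sum] using h
    omega
  · intro h; subst h; simp

theorem hfun_zero : hfun (Φ := Φ) bΦ 0 = 0 := by simp [hfun]

theorem hfun_single (i : ι) : hfun bΦ (Finsupp.single i 1) = bΦ i := by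
  rw [hfun, if_pos, Finsupp.support_single_ne_zero i one_ne_zero, Finset.sum_singleton]
  rw [Finsupp.sum_single_index]; rfl

/-- the projection of `MvPolynomial ι R` onto its degree-one part, realized in `Φ`. -/
noncomputable def piMap : MvPolynomial ι R →ₗ[R] Φ :=
  (MvPolynomial.basisMonomials ι R).constr ℕ (hfun bΦ)

theorem piMap_monomial (d : ι →₀ ℕ) (c : R) :
    piMap bΦ (monomial d c) = c • hfun bΦ d := by
  have h : (monomial d c : MvPolynomial ι R) = c • (MvPolynomial.basisMonomials ι R d) := by
    rw [MvPolynomial.coe_basisMonomials]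
    simp [MvPolynomial.smul_monomial]
  rw [piMap, h, map_smul, Module.Basis.constr_basis]

theorem piMap_X (i : ι) : piMap (R := R) bΦ (X i) = bΦ i := by
  have : (X i : MvPolynomial ι R) = monomial (Finsupp.single i 1) 1 := rfl
  rw [this, piMap_monomial, hfun_single, one_smul]

theorem piMap_one : piMap (R := R) bΦ (1 : MvPolynomial ι R) = 0 := by
  have : (1 : MvPolynomial ι R) = monomial 0 1 := by simp
  rw [this, piMap_monomial, hfun_zero, smul_zero]

variable (η : MvPolynomial ι R →ₐ[R] R) (hη : ∀ i : ι, η (X i) = 0)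

include hη in
theorem eta_monomial (d : ι →₀ ℕ) (c : R) :
    η (monomial d c) = if d = 0 then c else 0 := by
  rw [MvPolynomial.monomial_eq, map_mul]
  have hC : η (C c) = c := by
    have : (C c : MvPolynomial ι R) = algebraMap R (MvPolynomial ι R) c := rfl
    rw [this, AlgHom.commutes]; rfl
  rw [hC]
  by_cases hd : d = 0
  · subst hd; simp
  · rw [if_neg hd]
    have : η (d.prod fun n e => (X n : MvPolynomial ι R) ^ e) = 0 := by
      rw [Finsupp.prod, map_prod]
      obtain ⟨i, hi⟩ : ∃ i, d i ≠ 0 := by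
        by_contra h
        push_neg at h
        exact hd (Finsupp.ext fun i => h i)
      refine Finset.prod_eq_zero (Finsupp.mem_support_iff.mpr hi) ?_
      rw [map_pow, hη i, zero_pow hi]
    rw [this, mul_zero]

include hη in
theorem piMap_mul (p q : MvPolynomial ι R) :
    piMap bΦ (p * q) = η q • piMap bΦ p + η p • piMap bΦ q := by
  induction p using MvPolynomial.induction_on' with
  | add p₁ p₂ h1 h2 =>
    simp only [add_mul, map_add, h1, h2, add_smul, smul_add]
    abel
  | monomial u a =>
    induction q using MvPolynomial.induction_on' with
    | add q₁ q₂ h1 h2 =>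
      simp only [mul_add, map_add, h1, h2, add_smul, smul_add]
      abel
    | monomial v b =>
      rw [MvPolynomial.monomial_mul, piMap_monomial, piMap_monomial, piMap_monomial,
        eta_monomial η hη, eta_monomial η hη]
      by_cases hu : u = 0 <;> by_cases hv : v = 0
      · subst hu; subst hv
        simp [hfun_zero]
      · subst hu
        rw [if_pos rfl, if_neg hv]
        simp [smul_smul]
      · subst hv
        rw [if_pos rfl, if_neg hu]
        simp [smul_smul, mul_comm a b]
      · rw [if_neg hu, if_neg hv, zero_smul, zero_smul, add_zero]
        have hsum : ((u + v).sum fun _ n => n) ≠ 1 := by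
          rw [Finsupp.sum_add_index' (fun _ => rfl) (fun _ _ _ => rfl)]
          have h1 : (u.sum fun _ n => n) ≠ 0 := fun h => hu ((total_eq_zero_iff u).mp h)
          have h2 : (v.sum fun _ n => n) ≠ 0 := fun h => hv ((total_eq_zero_iff v).mp h)
          omega
        rw [hfun, if_neg hsum, smul_zero]

end Pi
section Lam
variable {R S Φ ι : Type} [CommRing R] [CommRing S] [Algebra R S]
  [AddCommGroup Φ] [Module R Φ]
variable (bΦ : Module.Basis ι R Φ)
variable (Δ : MvPolynomial ι R →ₐ[R] MvPolynomial ι R ⊗[R] MvPolynomial ι R)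
variable (η : MvPolynomial ι R →ₐ[R] R)
variable (r : Φ →ₗ[R] Φ →ₗ[R] S)

noncomputable def ell : ι → (MvPolynomial ι R →ₗ[R] S) := fun i => (r (bΦ i)) ∘ₗ piMap bΦ

variable (hΔ : ∀ i : ι, Δ (X i) = X i ⊗ₜ[R] (1 : MvPolynomial ι R)
      + (1 : MvPolynomial ι R) ⊗ₜ[R] X i)
variable (hη : ∀ i : ι, η (X i) = 0)

noncomputable def Lam : MvPolynomial ι R → (MvPolynomial ι R →ₗ[R] S) :=
  letI i1 := convCommRing (S := S) Δ.toLinearMap η.toLinearMap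
    (mv_coassoc Δ hΔ) (mv_cocomm Δ hΔ) (mv_counit_left Δ η hΔ hη) (mv_counit_right Δ η hΔ hη)
  letI i2 := convAlgebra (S := S) Δ.toLinearMap η.toLinearMap
    (mv_coassoc Δ hΔ) (mv_cocomm Δ hΔ) (mv_counit_left Δ η hΔ hη) (mv_counit_right Δ η hΔ hη)
  fun a => MvPolynomial.aeval (R := R) (ell bΦ r) a

theorem Lam_X (i : ι) : Lam bΦ Δ η r hΔ hη (X i) = ell bΦ r i := by
  letI i1 := convCommRing (S := S) Δ.toLinearMap η.toLinearMap
    (mv_coassoc Δ hΔ) (mv_cocomm Δ hΔ) (mv_counit_left Δ η hΔ hη) (mv_counit_right Δ η hΔ hη)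
  letI i2 := convAlgebra (S := S) Δ.toLinearMap η.toLinearMap
    (mv_coassoc Δ hΔ) (mv_cocomm Δ hΔ) (mv_counit_left Δ η hΔ hη) (mv_counit_right Δ η hΔ hη)
  show (MvPolynomial.aeval (R := R) (ell bΦ r)) (X i) = ell bΦ r i
  exact MvPolynomial.aeval_X (R := R) (f := ell bΦ r) i

theorem Lam_one : Lam bΦ Δ η r hΔ hη 1 = convOne η.toLinearMap := by
  letI i1 := convCommRing (S := S) Δ.toLinearMap η.toLinearMap
    (mv_coassoc Δ hΔ) (mv_cocomm Δ hΔ) (mv_counit_left Δ η hΔ hη) (mv_counit_right Δ η hΔ hη)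
  letI i2 := convAlgebra (S := S) Δ.toLinearMap η.toLinearMap
    (mv_coassoc Δ hΔ) (mv_cocomm Δ hΔ) (mv_counit_left Δ η hΔ hη) (mv_counit_right Δ η hΔ hη)
  show (MvPolynomial.aeval (R := R) (ell bΦ r)) 1 = convOne η.toLinearMap
  rw [map_one]
  rfl

theorem Lam_mul (a b : MvPolynomial ι R) :
    Lam bΦ Δ η r hΔ hη (a * b)
      = conv Δ.toLinearMap (Lam bΦ Δ η r hΔ hη a) (Lam bΦ Δ η r hΔ hη b) := by
  letI i1 := convCommRing (S := S) Δ.toLinearMap η.toLinearMap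
    (mv_coassoc Δ hΔ) (mv_cocomm Δ hΔ) (mv_counit_left Δ η hΔ hη) (mv_counit_right Δ η hΔ hη)
  letI i2 := convAlgebra (S := S) Δ.toLinearMap η.toLinearMap
    (mv_coassoc Δ hΔ) (mv_cocomm Δ hΔ) (mv_counit_left Δ η hΔ hη) (mv_counit_right Δ η hΔ hη)
  show (MvPolynomial.aeval (R := R) (ell bΦ r)) (a * b)
      = conv Δ.toLinearMap ((MvPolynomial.aeval (R := R) (ell bΦ r)) a)
          ((MvPolynomial.aeval (R := R) (ell bΦ r)) b)
  rw [map_mul]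
  rfl

theorem Lam_add (a b : MvPolynomial ι R) :
    Lam bΦ Δ η r hΔ hη (a + b) = Lam bΦ Δ η r hΔ hη a + Lam bΦ Δ η r hΔ hη b := by
  letI i1 := convCommRing (S := S) Δ.toLinearMap η.toLinearMap
    (mv_coassoc Δ hΔ) (mv_cocomm Δ hΔ) (mv_counit_left Δ η hΔ hη) (mv_counit_right Δ η hΔ hη)
  letI i2 := convAlgebra (S := S) Δ.toLinearMap η.toLinearMap
    (mv_coassoc Δ hΔ) (mv_cocomm Δ hΔ) (mv_counit_left Δ η hΔ hη) (mv_counit_right Δ η hΔ hη)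
  show (MvPolynomial.aeval (R := R) (ell bΦ r)) (a + b)
      = (MvPolynomial.aeval (R := R) (ell bΦ r)) a + (MvPolynomial.aeval (R := R) (ell bΦ r)) b
  exact map_add _ a b

theorem Lam_smul (c : R) (a : MvPolynomial ι R) :
    Lam bΦ Δ η r hΔ hη (c • a) = c • Lam bΦ Δ η r hΔ hη a := by
  letI i1 := convCommRing (S := S) Δ.toLinearMap η.toLinearMap
    (mv_coassoc Δ hΔ) (mv_cocomm Δ hΔ) (mv_counit_left Δ η hΔ hη) (mv_counit_right Δ η hΔ hη)
  letI i2 := convAlgebra (S := S) Δ.toLinearMap η.toLinearMap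
    (mv_coassoc Δ hΔ) (mv_cocomm Δ hΔ) (mv_counit_left Δ η hΔ hη) (mv_counit_right Δ η hΔ hη)
  show (MvPolynomial.aeval (R := R) (ell bΦ r)) (c • a)
      = c • (MvPolynomial.aeval (R := R) (ell bΦ r)) a
  rw [MvPolynomial.smul_eq_C_mul, map_mul, MvPolynomial.aeval_C]
  exact (Algebra.smul_def c _).symm

noncomputable def rhoMap : MvPolynomial ι R →ₗ[R] MvPolynomial ι R →ₗ[R] S where
  toFun := Lam bΦ Δ η r hΔ hη
  map_add' := Lam_add bΦ Δ η r hΔ hη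
  map_smul' := Lam_smul bΦ Δ η r hΔ hη

end Lam
section Rho
variable {R S Φ ι : Type} [CommRing R] [CommRing S] [Algebra R S]
  [AddCommGroup Φ] [Module R Φ]
variable (bΦ : Module.Basis ι R Φ)
variable (lin : Φ →ₗ[R] MvPolynomial ι R)
variable (Δ : MvPolynomial ι R →ₐ[R] MvPolynomial ι R ⊗[R] MvPolynomial ι R)
variable (η : MvPolynomial ι R →ₐ[R] R)
variable (r : Φ →ₗ[R] Φ →ₗ[R] S)
variable (hlin : ∀ i : ι, lin (bΦ i) = X i)
variable (hΔ : ∀ i : ι, Δ (X i) = X i ⊗ₜ[R] (1 : MvPolynomial ι R)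
      + (1 : MvPolynomial ι R) ⊗ₜ[R] X i)
variable (hη : ∀ i : ι, η (X i) = 0)

theorem rhoMap_apply (a : MvPolynomial ι R) :
    rhoMap bΦ Δ η r hΔ hη a = Lam bΦ Δ η r hΔ hη a := rfl

theorem rho_one_left (a : MvPolynomial ι R) :
    rhoMap bΦ Δ η r hΔ hη 1 a = algebraMap R S (η a) := by
  rw [rhoMap_apply, Lam_one, convOne_apply]
  rfl

theorem rho_mul_left (a b c : MvPolynomial ι R) {ιt : Type} (t : Finset ιt)
    (c₁ c₂ : ιt → MvPolynomial ι R)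
    (hc : Δ.toLinearMap c = ∑ i ∈ t, c₁ i ⊗ₜ[R] c₂ i) :
    rhoMap bΦ Δ η r hΔ hη (a * b) c
      = ∑ i ∈ t, rhoMap bΦ Δ η r hΔ hη a (c₁ i) * rhoMap bΦ Δ η r hΔ hη b (c₂ i) := by
  rw [rhoMap_apply, Lam_mul, conv_apply, hc, map_sum, map_sum]
  refine Finset.sum_congr rfl fun i _ => ?_
  rw [TensorProduct.map_tmul, LinearMap.mul'_apply]
  rfl

include hlin in
theorem rho_lin (φ : Φ) :
    rhoMap bΦ Δ η r hΔ hη (lin φ) = (r φ) ∘ₗ piMap bΦ := by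
  have h : (rhoMap bΦ Δ η r hΔ hη) ∘ₗ lin
      = (LinearMap.lcomp R S (piMap bΦ)) ∘ₗ r := by
    apply Module.Basis.ext bΦ
    intro i
    simp only [LinearMap.comp_apply, hlin, LinearMap.lcomp_apply']
    rw [rhoMap_apply, Lam_X]
    rfl
  exact DFunLike.congr_fun h φ

include hlin hη in
theorem eta_lin (φ : Φ) : η (lin φ) = 0 := by
  have h : η.toLinearMap ∘ₗ lin = 0 := by
    apply Module.Basis.ext bΦ
    intro i
    simp [hlin, hη]
  exact DFunLike.congr_fun h φ

include hlin hΔ in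
theorem prim_lin (φ : Φ) :
    Δ (lin φ) = lin φ ⊗ₜ[R] (1 : MvPolynomial ι R) + (1 : MvPolynomial ι R) ⊗ₜ[R] lin φ := by
  have h : Δ.toLinearMap ∘ₗ lin
      = ((TensorProduct.mk R (MvPolynomial ι R) (MvPolynomial ι R)).flip 1) ∘ₗ lin
        + (TensorProduct.mk R (MvPolynomial ι R) (MvPolynomial ι R) 1) ∘ₗ lin := by
    apply Module.Basis.ext bΦ
    intro i
    simp [hlin, hΔ]
  exact DFunLike.congr_fun h φ

include hlin hη in
theorem eta_prod {β : Type} [DecidableEq β] (T : Finset β) (ψ : β → Φ) (hT : T.Nonempty) :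
    η (∏ b ∈ T, lin (ψ b)) = 0 := by
  obtain ⟨j, hj⟩ := hT
  rw [map_prod]
  exact Finset.prod_eq_zero hj (eta_lin bΦ lin η hlin hη (ψ j))

include hlin in
theorem pi_lin (φ : Φ) : piMap bΦ (lin φ) = φ := by
  have h : (piMap bΦ) ∘ₗ lin = LinearMap.id := by
    apply Module.Basis.ext bΦ
    intro i
    simp [hlin, piMap_X]
  exact DFunLike.congr_fun h φ

include hlin hη in
theorem pi_prod_card_ne_one {β : Type} [DecidableEq β] (T : Finset β) (ψ : β → Φ) (hT : T.card ≠ 1) :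
    piMap bΦ (∏ b ∈ T, lin (ψ b)) = 0 := by
  by_cases h0 : T.card = 0
  · rw [Finset.card_eq_zero.mp h0, Finset.prod_empty, piMap_one]
  · have h2 : 2 ≤ T.card := by omega
    obtain ⟨j, hj⟩ := Finset.card_pos.mp (show 0 < T.card by omega)
    rw [← Finset.mul_prod_erase T _ hj, piMap_mul bΦ η hη]
    have he : (T.erase j).Nonempty := Finset.card_pos.mp (by
      rw [Finset.card_erase_of_mem hj]; omega)
    rw [eta_prod bΦ lin η hlin hη _ _ he, eta_lin bΦ lin η hlin hη, zero_smul, zero_smul,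
      add_zero]

include hlin hΔ in
theorem hDelta_prod {β : Type} [DecidableEq β] (B : Finset β) (ψ : β → Φ) :
    Δ.toLinearMap (∏ b ∈ B, lin (ψ b))
      = ∑ T ∈ B.powerset, (∏ b ∈ T, lin (ψ b)) ⊗ₜ[R] (∏ b ∈ B \ T, lin (ψ b)) := by
  simp only [AlgHom.toLinearMap_apply]
  rw [map_prod]
  have hstep : ∀ b ∈ B, Δ (lin (ψ b))
      = (Algebra.TensorProduct.includeLeft : MvPolynomial ι R →ₐ[R] _) (lin (ψ b))
        + (Algebra.TensorProduct.includeRight : MvPolynomial ι R →ₐ[R] _) (lin (ψ b)) := by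
    intro b _
    rw [prim_lin bΦ lin Δ hlin hΔ]
    rfl
  rw [Finset.prod_congr rfl hstep, Finset.prod_add]
  refine Finset.sum_congr rfl fun T _ => ?_
  rw [← map_prod (Algebra.TensorProduct.includeLeft :
      MvPolynomial ι R →ₐ[R] MvPolynomial ι R ⊗[R] MvPolynomial ι R) (fun b => lin (ψ b)) T,
    ← map_prod (Algebra.TensorProduct.includeRight :
      MvPolynomial ι R →ₐ[R] MvPolynomial ι R ⊗[R] MvPolynomial ι R) (fun b => lin (ψ b)) (B \ T)]
  simp only [Algebra.TensorProduct.includeLeft_apply, Algebra.TensorProduct.includeRight_apply,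
    Algebra.TensorProduct.tmul_mul_tmul, mul_one, one_mul]

include hlin hη hΔ in
theorem rho_step (x : Φ) (P : MvPolynomial ι R) {β : Type} [DecidableEq β] (B : Finset β) (ψ : β → Φ) :
    rhoMap bΦ Δ η r hΔ hη (lin x * P) (∏ b ∈ B, lin (ψ b))
      = ∑ j ∈ B, r x (ψ j) * rhoMap bΦ Δ η r hΔ hη P (∏ b ∈ B.erase j, lin (ψ b)) := by
  rw [rho_mul_left bΦ Δ η r hΔ hη (lin x) P _ B.powerset _ _
    (hDelta_prod bΦ lin Δ hlin hΔ B ψ)]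
  have hzero : ∀ T ∈ B.powerset,
      rhoMap bΦ Δ η r hΔ hη (lin x) (∏ b ∈ T, lin (ψ b))
        * rhoMap bΦ Δ η r hΔ hη P (∏ b ∈ B \ T, lin (ψ b)) ≠ 0 → T.card = 1 := by
    intro T _ hne
    by_contra hcard
    apply hne
    rw [rho_lin bΦ lin Δ η r hlin hΔ hη, LinearMap.comp_apply,
      pi_prod_card_ne_one bΦ lin η hlin hη T ψ hcard, map_zero, zero_mul]
  rw [← Finset.sum_filter_of_ne hzero]
  have himg : B.powerset.filter (fun T => T.card = 1) = B.image (fun j => {j}) := by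
    ext T
    simp only [Finset.mem_filter, Finset.mem_powerset, Finset.mem_image, Finset.card_eq_one]
    constructor
    · rintro ⟨hsub, j, rfl⟩
      exact ⟨j, hsub (Finset.mem_singleton_self j), rfl⟩
    · rintro ⟨j, hj, rfl⟩
      exact ⟨Finset.singleton_subset_iff.mpr hj, j, rfl⟩
  rw [himg, Finset.sum_image (fun a _ b _ h => Finset.singleton_injective h)]
  refine Finset.sum_congr rfl fun j hj => ?_
  rw [Finset.prod_singleton, rho_lin bΦ lin Δ η r hlin hΔ hη, LinearMap.comp_apply,
    pi_lin bΦ lin hlin, Finset.sdiff_singleton_eq_erase]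

include hlin hη hΔ in
theorem rho_zero : ∀ (m : ℕ) (φ : Fin m → Φ) {β : Type} [DecidableEq β] (B : Finset β) (ψ : β → Φ),
    m ≠ B.card →
    rhoMap bΦ Δ η r hΔ hη (∏ i, lin (φ i)) (∏ b ∈ B, lin (ψ b)) = 0 := by
  intro m
  induction m with
  | zero =>
    intro φ β _ B ψ hm
    have hB : B.Nonempty := Finset.card_pos.mp (by omega)
    rw [Fin.prod_univ_zero, rho_one_left, eta_prod bΦ lin η hlin hη B ψ hB, map_zero]
  | succ m IH =>
    intro φ β _ B ψ hm
    rw [Fin.prod_univ_succ, rho_step bΦ lin Δ η r hlin hΔ hη]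
    refine Finset.sum_eq_zero fun j hj => ?_
    have hcard : (B.erase j).card = B.card - 1 := Finset.card_erase_of_mem hj
    have hBpos : 0 < B.card := Finset.card_pos.mpr ⟨j, hj⟩
    rw [IH (fun i => φ i.succ) (B.erase j) ψ (by omega), mul_zero]

include hlin hη hΔ in
theorem rho_eq : ∀ (m : ℕ) (φ ψ : Fin m → Φ),
    rhoMap bΦ Δ η r hΔ hη (∏ i, lin (φ i)) (∏ i, lin (ψ i))
      = ∑ σ : Equiv.Perm (Fin m), ∏ i, r (φ i) (ψ (σ i)) := by
  intro m
  induction m with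
  | zero =>
    intro φ ψ
    rw [Fin.prod_univ_zero, Fin.prod_univ_zero, rho_one_left, map_one]
    simp
  | succ m IH =>
    intro φ ψ
    have hstep := rho_step bΦ lin Δ η r hlin hΔ hη (φ 0) (∏ i : Fin m, lin (φ i.succ))
      (Finset.univ : Finset (Fin (m + 1))) ψ
    rw [Fin.prod_univ_succ (f := fun i => lin (φ i)), hstep]
    rw [← Equiv.sum_comp (Equiv.Perm.decomposeFin).symm
      (fun σ => ∏ i, r (φ i) (ψ (σ i))), Fintype.sum_prod_type]
    refine Finset.sum_congr rfl fun j _ => ?_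
    have hinj : Function.Injective (fun x : Fin m => Equiv.swap 0 j x.succ) :=
      fun a b h => Fin.succ_injective m (Equiv.injective _ h)
    have himg : (Finset.univ.image (fun x : Fin m => Equiv.swap 0 j x.succ))
        = Finset.univ.erase j := by
      apply Finset.eq_of_subset_of_card_le
      · intro y hy
        simp only [Finset.mem_image] at hy
        obtain ⟨x, _, rfl⟩ := hy
        refine Finset.mem_erase.mpr ⟨?_, Finset.mem_univ _⟩
        intro hcontra
        have h2 := congrArg (Equiv.swap 0 j) hcontra
        rw [Equiv.swap_apply_self, Equiv.swap_apply_right] at h2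
        exact Fin.succ_ne_zero x h2
      · rw [Finset.card_erase_of_mem (Finset.mem_univ j),
          Finset.card_image_of_injective _ hinj]
        simp
    have herase : (∏ b ∈ Finset.univ.erase j, lin (ψ b))
        = ∏ x : Fin m, lin (ψ (Equiv.swap 0 j x.succ)) := by
      rw [← himg, Finset.prod_image (fun a _ b _ h => hinj h)]
    rw [herase, IH (fun i => φ i.succ) (fun x => ψ (Equiv.swap 0 j x.succ)), Finset.mul_sum]
    refine Finset.sum_congr rfl fun e _ => ?_
    rw [Fin.prod_univ_succ]
    congr 1
    · rw [Equiv.Perm.decomposeFin_symm_apply_zero]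
    · refine Finset.prod_congr rfl fun x _ => ?_
      rw [Equiv.Perm.decomposeFin_symm_apply_succ]
end Rho

section Final
variable {R S Φ ι : Type} [CommRing R] [CommRing S] [Algebra R S]
  [AddCommGroup Φ] [Module R Φ]

theorem monomial_eq_prod (d : ι →₀ ℕ) : ∃ (n : ℕ) (g : Fin n → ι),
    (monomial d (1 : R) : MvPolynomial ι R) = ∏ x : Fin n, X (g x) := by
  have h1 : (monomial d (1 : R) : MvPolynomial ι R)
      = (d.toMultiset.map (X : ι → MvPolynomial ι R)).prod := by
    induction d using Finsupp.induction with
    | zero => simp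
    | single_add a n f ha hn ih =>
      rw [Finsupp.toMultiset_add, Multiset.map_add, Multiset.prod_add, ← ih,
        Finsupp.toMultiset_single, Multiset.map_nsmul, Multiset.map_singleton,
        Multiset.prod_nsmul, Multiset.prod_singleton]
      have h2 : (monomial (Finsupp.single a n + f) (1 : R) : MvPolynomial ι R)
          = monomial (Finsupp.single a n) 1 * monomial f 1 := by
        rw [MvPolynomial.monomial_mul, one_mul]
      rw [h2, ← MvPolynomial.X_pow_eq_monomial]
  refine ⟨(d.toMultiset.toList).length, fun x => (d.toMultiset.toList).get x, ?_⟩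
  rw [h1]
  conv_lhs => rw [← Multiset.coe_toList d.toMultiset]
  have h3 : (d.toMultiset.toList : Multiset ι).map (X : ι → MvPolynomial ι R)
      = ((d.toMultiset.toList).map X : List (MvPolynomial ι R)) := rfl
  rw [h3, Multiset.prod_coe]
  have h4 : (d.toMultiset.toList).map (X : ι → MvPolynomial ι R)
      = List.ofFn (fun x => X ((d.toMultiset.toList).get x)) := by
    conv_lhs => rw [← List.ofFn_get (d.toMultiset.toList)]
    rw [List.map_ofFn]
    rfl
  rw [h4, List.prod_ofFn]

variable (bΦ : Module.Basis ι R Φ)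
variable (lin : Φ →ₗ[R] MvPolynomial ι R)
variable (Δ : MvPolynomial ι R →ₐ[R] MvPolynomial ι R ⊗[R] MvPolynomial ι R)
variable (η : MvPolynomial ι R →ₐ[R] R)
variable (r : Φ →ₗ[R] Φ →ₗ[R] S)
variable (hlin : ∀ i : ι, lin (bΦ i) = X i)
variable (hΔ : ∀ i : ι, Δ (X i) = X i ⊗ₜ[R] (1 : MvPolynomial ι R)
      + (1 : MvPolynomial ι R) ⊗ₜ[R] X i)
variable (hη : ∀ i : ι, η (X i) = 0)

include hlin hΔ hη in
theorem rho_sym (a c : MvPolynomial ι R) :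
    rhoMap bΦ Δ η r hΔ hη a c = rhoMap bΦ Δ η r.flip hΔ hη c a := by
  have key : rhoMap bΦ Δ η r hΔ hη = (rhoMap bΦ Δ η r.flip hΔ hη).flip := by
    apply Module.Basis.ext (MvPolynomial.basisMonomials ι R)
    intro d
    apply Module.Basis.ext (MvPolynomial.basisMonomials ι R)
    intro e
    simp only [MvPolynomial.coe_basisMonomials, LinearMap.flip_apply]
    obtain ⟨n, g, hg⟩ := monomial_eq_prod (R := R) d
    obtain ⟨n', g', hg'⟩ := monomial_eq_prod (R := R) e
    have hX : ∀ (k : ℕ) (gg : Fin k → ι),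
        (∏ x : Fin k, (X (gg x) : MvPolynomial ι R)) = ∏ x : Fin k, lin (bΦ (gg x)) :=
      fun k gg => Finset.prod_congr rfl fun x _ => (hlin (gg x)).symm
    rw [hg, hg', hX n g, hX n' g']
    by_cases hnn : n = n'
    · subst hnn
      rw [rho_eq bΦ lin Δ η r hlin hΔ hη n, rho_eq bΦ lin Δ η r.flip hlin hΔ hη n]
      refine Fintype.sum_bijective (fun σ : Equiv.Perm (Fin n) => σ⁻¹)
        ⟨fun a b h => inv_injective h, fun σ => ⟨σ⁻¹, inv_inv σ⟩⟩ _ _ fun σ => ?_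
      have h5 := Equiv.prod_comp σ (fun i => r (bΦ (g (σ⁻¹ i))) (bΦ (g' i)))
      simp only [show ∀ i, σ⁻¹ (σ i) = i from fun i => σ.symm_apply_apply i] at h5
      rw [h5]
      refine Finset.prod_congr rfl fun x _ => ?_
      simp
    · rw [rho_zero bΦ lin Δ η r hlin hΔ hη n (fun x => bΦ (g x))
          (Finset.univ : Finset (Fin n')) (fun x => bΦ (g' x)) (by simpa using hnn),
        rho_zero bΦ lin Δ η r.flip hlin hΔ hη n' (fun x => bΦ (g' x))
          (Finset.univ : Finset (Fin n)) (fun x => bΦ (g x)) (by simpa using Ne.symm hnn)]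
  rw [key]
  rfl

end Final

/-- Let `Φ` be a free `R`-module (with basis indexed by `ι`) and
`M = S*(Φ)` its symmetric algebra (realized as `MvPolynomial ι R`), a commutative
cocommutative Hopf algebra with `Φ` primitive.  Any linear map `r : Φ ⊗ Φ → S` to
a commutative `R`-algebra `S` extends to an `S`-valued bicharacter of `M` via the
permanent formula. -/
theorem symmetric_algebra_bicharacter (R S Φ ι : Type) [CommRing R] [CommRing S]
    [Algebra R S] [AddCommGroup Φ] [Module R Φ] (bΦ : Module.Basis ι R Φ)
    (lin : Φ →ₗ[R] MvPolynomial ι R) (hlin : ∀ i : ι, lin (bΦ i) = X i)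
    (Δ : MvPolynomial ι R →ₐ[R] MvPolynomial ι R ⊗[R] MvPolynomial ι R)
    (hΔ : ∀ i : ι, Δ (X i) = X i ⊗ₜ[R] (1 : MvPolynomial ι R)
      + (1 : MvPolynomial ι R) ⊗ₜ[R] X i)
    (η : MvPolynomial ι R →ₐ[R] R) (hη : ∀ i : ι, η (X i) = 0)
    (r : Φ →ₗ[R] Φ →ₗ[R] S) :
    ∃ ρ : MvPolynomial ι R →ₗ[R] MvPolynomial ι R →ₗ[R] S,
      IsBicharacter R (MvPolynomial ι R) S Δ.toLinearMap η.toLinearMap ρ ∧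
      (∀ (m k : ℕ) (φ : Fin m → Φ) (ψ : Fin k → Φ), m ≠ k →
        ρ (∏ i, lin (φ i)) (∏ j, lin (ψ j)) = 0) ∧
      (∀ (m : ℕ) (φ ψ : Fin m → Φ),
        ρ (∏ i, lin (φ i)) (∏ i, lin (ψ i))
          = ∑ σ : Equiv.Perm (Fin m), ∏ i, r (φ i) (ψ (σ i))) := by
  refine ⟨rhoMap bΦ Δ η r hΔ hη, ⟨?_, ?_, ?_, ?_⟩, ?_, ?_⟩
  · intro a
    exact rho_one_left bΦ Δ η r hΔ hη a
  · intro a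
    rw [rho_sym bΦ lin Δ η r hlin hΔ hη a 1]
    exact rho_one_left bΦ Δ η r.flip hΔ hη a
  · intro a b c ιt t c₁ c₂ hc
    exact rho_mul_left bΦ Δ η r hΔ hη a b c t c₁ c₂ hc
  · intro a b c ιt t a₁ a₂ ha
    rw [rho_sym bΦ lin Δ η r hlin hΔ hη a (b * c),
      rho_mul_left bΦ Δ η r.flip hΔ hη b c a t a₁ a₂ ha]
    refine Finset.sum_congr rfl fun i _ => ?_
    rw [← rho_sym bΦ lin Δ η r hlin hΔ hη (a₁ i) b,
      ← rho_sym bΦ lin Δ η r hlin hΔ hη (a₂ i) c]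
  · intro m k φ ψ hmk
    exact rho_zero bΦ lin Δ η r hlin hΔ hη m φ (Finset.univ : Finset (Fin k)) ψ
      (by simpa using hmk)
  · intro m φ ψ
    exact rho_eq bΦ lin Δ η r hlin hΔ hη m φ ψ
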